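/- Let G be a topologically sorted DAG on n nodes. Then there exists m₀ : ℕ such that for all m ≥ m₀ the colon ideal (I_G : θ₀^m) = {f ∈ R | θ₀^m * f ∈ I_G} equals the saturation p_G; in particular, for all sufficiently large m, (I_G : θ₀^m) is a prime ideal. -/

import Mathlib

set_option synthInstance.maxHeartbeats 2000000
set_option maxHeartbeats 2000000


open MvPolynomial Matrix

noncomputable section

/-- The parent set of a node `j` in the DAG with edge relation `E`. -/
def parents {n : ℕ} (E : Fin n → Fin n → Prop) [DecidableRel E] (j : Fin n) : Finset (Fin n) :=
  Finset.univ.filter (fun i => E i j)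

/-- The minor of `M` with rows `A` and columns `B`, each listed in increasing order. -/
def fminor {n : ℕ} {R : Type*} [CommRing R] (M : Matrix (Fin n) (Fin n) R)
    (A B : Finset (Fin n)) (h : B.card = A.card) : R :=
  Matrix.det (Matrix.of fun k l : Fin A.card =>
    M (A.orderEmbOfFin rfl k) (B.orderEmbOfFin h l))

/-- The generic symmetric matrix, with `(i,j)` entry the variable indexed by the unordered
pair `s(i,j)`. -/
def genMat (n : ℕ) : Matrix (Fin n) (Fin n) (MvPolynomial (Sym2 (Fin n)) ℂ) :=
  fun i j => X (Sym2.mk i j)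

/-- The ideal of imposed relations `I_G`, generated by the minors `det M_{{i}∪K,{j}∪K}` over all
pairs `i < j` with `¬ E i j`, where `K = pa(j)`. -/
def impIdeal {n : ℕ} (E : Fin n → Fin n → Prop) [DecidableRel E] :
    Ideal (MvPolynomial (Sym2 (Fin n)) ℂ) :=
  Ideal.span { f | ∃ i j : Fin n, ∃ _ : i < j, ∃ _ : ¬ E i j,
    ∃ h : (insert j (parents E j)).card = (insert i (parents E j)).card,
      f = fminor (genMat n) (insert i (parents E j)) (insert j (parents E j)) h }

/-- The product `θ₀` of all principal minors of the generic symmetric matrix. -/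
def theta0 (n : ℕ) : MvPolynomial (Sym2 (Fin n)) ℂ :=
  ∏ A : Finset (Fin n), fminor (genMat n) A A rfl

/-- The saturation `{f | ∃ m, g ^ m * f ∈ I}` of an ideal `I` at an element `g`. -/
def satIdeal {R : Type*} [CommRing R] (I : Ideal R) (g : R) : Ideal R where
  carrier := {f | ∃ m : ℕ, g ^ m * f ∈ I}
  zero_mem' := ⟨0, by simp⟩
  add_mem' := by
    rintro a b ⟨ma, ha⟩ ⟨mb, hb⟩
    refine ⟨ma + mb, ?_⟩
    have h : g ^ (ma + mb) * (a + b) = g ^ mb * (g ^ ma * a) + g ^ ma * (g ^ mb * b) := by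
      ring
    rw [h]
    exact I.add_mem (I.mul_mem_left _ ha) (I.mul_mem_left _ hb)
  smul_mem' := by
    rintro c a ⟨m, hm⟩
    refine ⟨m, ?_⟩
    have h : g ^ m * (c • a) = c * (g ^ m * a) := by
      simp only [smul_eq_mul]; ring
    rw [h]
    exact I.mul_mem_left _ hm


/-- The saturation `p_G` of `I_G` at `θ₀`. -/
def satPG {n : ℕ} (E : Fin n → Fin n → Prop) [DecidableRel E] :
    Ideal (MvPolynomial (Sym2 (Fin n)) ℂ) :=
  satIdeal (impIdeal E) (theta0 n)

section PartA

variable {α : Type*} [CommRing α]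

/-- A1: determinant of a matrix with entries in a subalgebra lies in the subalgebra. -/
lemma det_mem_subalgebra {R₀ : Type*} [CommRing R₀] [Algebra R₀ α] (S : Subalgebra R₀ α)
    {k : ℕ} (M : Matrix (Fin k) (Fin k) α) (h : ∀ i j, M i j ∈ S) : M.det ∈ S := by
  rw [Matrix.det_apply']
  refine S.toSubmodule.sum_mem (fun σ _ => ?_)
  exact S.mul_mem (S.intCast_mem _) (S.prod_mem (fun i _ => h _ _))

/-- corner-zeroed matrix -/
def cornerZero {k : ℕ} (M : Matrix (Fin (k+1)) (Fin (k+1)) α) :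
    Matrix (Fin (k+1)) (Fin (k+1)) α :=
  Matrix.of fun x y => if x = Fin.last k ∧ y = Fin.last k then 0 else M x y

/-- A2: corner expansion. -/
lemma det_corner {k : ℕ} (M : Matrix (Fin (k+1)) (Fin (k+1)) α) :
    M.det = M (Fin.last k) (Fin.last k) * (M.submatrix Fin.castSucc Fin.castSucc).det
      + (cornerZero M).det := by
  rw [Matrix.det_succ_column M (Fin.last k), Matrix.det_succ_column (cornerZero M) (Fin.last k)]
  rw [Fin.sum_univ_castSucc, Fin.sum_univ_castSucc]
  have hsub : ∀ i : Fin k, (cornerZero M).submatrix (Fin.castSucc i).succAbove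
      (Fin.last k).succAbove = M.submatrix (Fin.castSucc i).succAbove (Fin.last k).succAbove := by
    intro i
    ext a b
    simp only [cornerZero, Matrix.submatrix_apply, Matrix.of_apply, Fin.succAbove_last]
    rw [if_neg]
    rintro ⟨-, hb⟩
    exact (Fin.castSucc_lt_last b).ne hb
  have hlast : ((-1 : α)) ^ ((Fin.last k : ℕ) + (Fin.last k : ℕ)) = 1 := by
    simpa using Even.neg_one_pow ⟨k, by ring⟩
  have hcz : (cornerZero M) (Fin.last k) (Fin.last k) = 0 := by
    simp [cornerZero]
  have hcs : ∀ i : Fin k, (cornerZero M) (Fin.castSucc i) (Fin.last k)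
      = M (Fin.castSucc i) (Fin.last k) := by
    intro i
    simp only [cornerZero, Matrix.of_apply]
    rw [if_neg]
    rintro ⟨hb, -⟩
    exact (Fin.castSucc_lt_last i).ne hb
  have hml : M.submatrix (Fin.last k).succAbove (Fin.last k).succAbove
      = M.submatrix Fin.castSucc Fin.castSucc := by
    rw [Fin.succAbove_last]
  rw [hcz, hml, hlast]
  simp only [hsub, hcs]
  ring

/-- A3: change of enumeration up to sign. -/
lemma fminor_eq_sign_mul {n : ℕ} (M : Matrix (Fin n) (Fin n) α) (A B : Finset (Fin n))
    (h : B.card = A.card) (r c : Fin A.card → Fin n)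
    (hr : ∀ x, r x ∈ A) (hc : ∀ x, c x ∈ B)
    (hri : Function.Injective r) (hci : Function.Injective c) :
    ∃ ε : α, ε * ε = 1 ∧
      fminor M A B h = ε * (Matrix.of fun x y => M (r x) (c y)).det := by
  classical
  have cardA : Fintype.card (Fin A.card) = Fintype.card A := by simp
  have cardB : Fintype.card (Fin A.card) = Fintype.card B := by simp [h]
  let r' : Fin A.card → A := fun x => ⟨r x, hr x⟩
  let c' : Fin A.card → B := fun x => ⟨c x, hc x⟩
  have hr' : Function.Bijective r' := by
    refine (Fintype.bijective_iff_injective_and_card _).2 ⟨?_, cardA⟩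
    intro x y hxy
    exact hri (congrArg Subtype.val hxy)
  have hc' : Function.Bijective c' := by
    refine (Fintype.bijective_iff_injective_and_card _).2 ⟨?_, cardB⟩
    intro x y hxy
    exact hci (congrArg Subtype.val hxy)
  let e' : Fin A.card → A := fun x => ⟨A.orderEmbOfFin rfl x, Finset.orderEmbOfFin_mem _ _ _⟩
  let f' : Fin A.card → B := fun x => ⟨B.orderEmbOfFin h x, Finset.orderEmbOfFin_mem _ _ _⟩
  have he' : Function.Bijective e' := by
    refine (Fintype.bijective_iff_injective_and_card _).2 ⟨?_, cardA⟩
    intro x y hxy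
    exact (A.orderEmbOfFin rfl).injective (congrArg Subtype.val hxy)
  have hf' : Function.Bijective f' := by
    refine (Fintype.bijective_iff_injective_and_card _).2 ⟨?_, cardB⟩
    intro x y hxy
    exact (B.orderEmbOfFin h).injective (congrArg Subtype.val hxy)
  let σ : Equiv.Perm (Fin A.card) := (Equiv.ofBijective r' hr').trans (Equiv.ofBijective e' he').symm
  let τ : Equiv.Perm (Fin A.card) := (Equiv.ofBijective c' hc').trans (Equiv.ofBijective f' hf').symm
  have hσ : ∀ x, A.orderEmbOfFin rfl (σ x) = r x := by
    intro x
    have : e' (σ x) = r' x := by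
      simp only [σ, Equiv.trans_apply]
      exact (Equiv.ofBijective e' he').apply_symm_apply _
    exact congrArg Subtype.val this
  have hτ : ∀ x, B.orderEmbOfFin h (τ x) = c x := by
    intro x
    have : f' (τ x) = c' x := by
      simp only [τ, Equiv.trans_apply]
      exact (Equiv.ofBijective f' hf').apply_symm_apply _
    exact congrArg Subtype.val this
  set P : Matrix (Fin A.card) (Fin A.card) α :=
    Matrix.of fun x y => M (A.orderEmbOfFin rfl x) (B.orderEmbOfFin h y) with hP
  have key : (Matrix.of fun x y => M (r x) (c y)) = (P.submatrix id ⇑τ).submatrix ⇑σ id := by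
    ext x y
    simp [P, hσ, hτ]
  have hdet : (Matrix.of fun x y => M (r x) (c y)).det
      = (Equiv.Perm.sign σ : ℤ) * ((Equiv.Perm.sign τ : ℤ) * P.det) := by
    rw [key, Matrix.det_permute, Matrix.det_permute']
  set s : ℤˣ := Equiv.Perm.sign σ * Equiv.Perm.sign τ with hs
  refine ⟨((s : ℤ) : α), ?_, ?_⟩
  · have h1 : (s : ℤ) * (s : ℤ) = 1 := by
      rw [← Units.val_mul, Int.units_mul_self s, Units.val_one]
    calc ((s : ℤ) : α) * ((s : ℤ) : α) = (((s : ℤ) * (s : ℤ) : ℤ) : α) := by push_cast; ring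
    _ = 1 := by rw [h1]; norm_num
  · have hdet' : (Matrix.of fun x y => M (r x) (c y)).det = ((s : ℤ) : α) * P.det := by
      rw [hdet, hs]
      push_cast
      ring
    have h1 : (s : ℤ) * (s : ℤ) = 1 := by
      rw [← Units.val_mul, Int.units_mul_self s, Units.val_one]
    have h2 : ((s : ℤ) : α) * ((s : ℤ) : α) = 1 := by
      calc ((s : ℤ) : α) * ((s : ℤ) : α) = (((s : ℤ) * (s : ℤ) : ℤ) : α) := by push_cast; ring
      _ = 1 := by rw [h1]; norm_num
    have : fminor M A B h = P.det := rfl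
    rw [this, hdet', ← mul_assoc, h2, one_mul]

end PartA


section Sym2Helpers

variable {n : ℕ}

def lo : Sym2 (Fin n) → Fin n := Sym2.lift ⟨fun a b => min a b, fun a b => min_comm a b⟩
def hi : Sym2 (Fin n) → Fin n := Sym2.lift ⟨fun a b => max a b, fun a b => max_comm a b⟩

@[simp] lemma lo_mk (a b : Fin n) : lo (Sym2.mk a b) = min a b := rfl
@[simp] lemma hi_mk (a b : Fin n) : hi (Sym2.mk a b) = max a b := rfl

lemma mk_lo_hi (v : Sym2 (Fin n)) : Sym2.mk (lo v) (hi v) = v := by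
  induction v using Sym2.ind with
  | _ a b =>
    rcases le_total a b with hab | hab
    · simp [min_eq_left hab, max_eq_right hab]
    · rw [lo_mk, hi_mk, min_eq_right hab, max_eq_left hab]
      exact Sym2.eq_swap
lemma isDiag_iff_lo_eq_hi (v : Sym2 (Fin n)) : v.IsDiag ↔ lo v = hi v := by
  induction v using Sym2.ind with
  | _ a b =>
    simp only [Sym2.mk_isDiag_iff, lo_mk, hi_mk]
    constructor
    · rintro rfl; simp
    · intro h
      rcases le_total a b with hab | hab
      · rw [min_eq_left hab, max_eq_right hab] at h; exact h
      · rw [min_eq_right hab, max_eq_left hab] at h; exact h.symm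
lemma lo_le_hi (v : Sym2 (Fin n)) : lo v ≤ hi v := by
  induction v using Sym2.ind with
  | _ a b => exact min_le_max
lemma lo_lt_hi_of_not_isDiag {v : Sym2 (Fin n)} (h : ¬ v.IsDiag) : lo v < hi v :=
  lt_of_le_of_ne (lo_le_hi v) (fun hc => h ((isDiag_iff_lo_eq_hi v).2 hc))

end Sym2Helpers

section Main

variable {n : ℕ} (E : Fin n → Fin n → Prop) [DecidableRel E]

/-- A variable is free if it is a diagonal entry or corresponds to an edge. -/
def FreeV (v : Sym2 (Fin n)) : Prop :=
  v.IsDiag ∨ ∃ i j : Fin n, E i j ∧ v = Sym2.mk i j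

instance : DecidablePred (FreeV E) := fun v => by unfold FreeV; infer_instance

abbrev SZ := MvPolynomial {v : Sym2 (Fin n) // FreeV E v} ℂ

abbrev KK := FractionRing (SZ E)

def iSZ : SZ E →+* KK E := algebraMap (SZ E) (KK E)

/-- number of parents -/
def kc (j : Fin n) : ℕ := (parents E j).card

def embK (j : Fin n) : Fin (kc E j) → Fin n := (parents E j).orderEmbOfFin rfl

def rowf (i j : Fin n) : Fin (kc E j + 1) → Fin n := Fin.snoc (embK E j) i

def colf (j : Fin n) : Fin (kc E j + 1) → Fin n := Fin.snoc (embK E j) j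

lemma embK_mem (j : Fin n) (x : Fin (kc E j)) : embK E j x ∈ parents E j :=
  Finset.orderEmbOfFin_mem _ _ _

lemma embK_edge (j : Fin n) (x : Fin (kc E j)) : E (embK E j x) j := by
  have := embK_mem E j x
  simp only [parents, Finset.mem_filter] at this
  exact this.2

lemma embK_lt (hE : ∀ i j, E i j → i < j) (j : Fin n) (x : Fin (kc E j)) : embK E j x < j :=
  hE _ _ (embK_edge E j x)

/-- matrix of g-values on the parents of j -/
def matA (g : Sym2 (Fin n) → KK E) (j : Fin n) : Matrix (Fin (kc E j)) (Fin (kc E j)) (KK E) :=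
  Matrix.of fun x y => g (Sym2.mk (embK E j x) (embK E j y))

/-- matrix of g-values, rows parents+i, cols parents+j -/
def matN (g : Sym2 (Fin n) → KK E) (i j : Fin n) :
    Matrix (Fin (kc E j + 1)) (Fin (kc E j + 1)) (KK E) :=
  Matrix.of fun x y => g (Sym2.mk (rowf E i j x) (colf E j y))

/-- approximations to the parametrization map -/
def approx : ℕ → Sym2 (Fin n) → KK E
  | 0 => fun v => if h : FreeV E v then iSZ E (X ⟨v, h⟩) else 0
  | (m+1) => fun v => if h : FreeV E v then iSZ E (X ⟨v, h⟩) else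
      - (Matrix.det (matA E (approx m) (hi v)))⁻¹
        * Matrix.det (cornerZero (matN E (approx m) (lo v) (hi v)))

lemma approx_free {v : Sym2 (Fin n)} (h : FreeV E v) (m : ℕ) :
    approx E m v = iSZ E (X ⟨v, h⟩) := by
  cases m <;> simp [approx, h]

lemma approx_stable (hE : ∀ i j, E i j → i < j) :
    ∀ (t : ℕ) (v : Sym2 (Fin n)) (m m' : ℕ), (hi v : ℕ) ≤ t →
      (hi v : ℕ) < m → (hi v : ℕ) < m' → approx E m v = approx E m' v := by
  intro t
  induction t with
  | zero =>
    intro v m m' ht _ _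
    by_cases h : FreeV E v
    · rw [approx_free E h, approx_free E h]
    · exfalso
      have h2 : (lo v : ℕ) < (hi v : ℕ) := lo_lt_hi_of_not_isDiag (v := v) (fun hd => h (Or.inl hd))
      omega
  | succ t ih =>
    intro v m m' ht hm hm'
    by_cases h : FreeV E v
    · rw [approx_free E h, approx_free E h]
    · have hdne : ¬ v.IsDiag := fun hd => h (Or.inl hd)
      have hlh : lo v < hi v := lo_lt_hi_of_not_isDiag hdne
      have h1 : 1 ≤ (hi v : ℕ) := by
        have : (lo v : ℕ) < (hi v : ℕ) := hlh
        omega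
      obtain ⟨m₁, rfl⟩ : ∃ m₁, m = m₁ + 1 := ⟨m - 1, by omega⟩
      obtain ⟨m₂, rfl⟩ : ∃ m₂, m' = m₂ + 1 := ⟨m' - 1, by omega⟩
      have key : ∀ w : Sym2 (Fin n), (FreeV E w ∨ (hi w : ℕ) < (hi v : ℕ)) →
          approx E m₁ w = approx E m₂ w := by
        rintro w (hw | hw)
        · rw [approx_free E hw, approx_free E hw]
        · exact ih w m₁ m₂ (by omega) (by omega) (by omega)
      have hA : matA E (approx E m₁) (hi v) = matA E (approx E m₂) (hi v) := by
        ext x y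
        exact key _ (Or.inr (by
          simp only [hi_mk]
          have hx := embK_lt E hE (hi v) x
          have hy := embK_lt E hE (hi v) y
          have : max (embK E (hi v) x) (embK E (hi v) y) < hi v := max_lt hx hy
          exact this))
      have hN : cornerZero (matN E (approx E m₁) (lo v) (hi v))
          = cornerZero (matN E (approx E m₂) (lo v) (hi v)) := by
        ext x y
        by_cases hxy : x = Fin.last _ ∧ y = Fin.last _
        · simp [cornerZero, hxy]
        · simp only [cornerZero, Matrix.of_apply, if_neg hxy]
          refine key _ ?_
          -- case analysis on x, y last or castSucc
          rcases Fin.eq_castSucc_or_eq_last x with ⟨x', rfl⟩ | rfl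
          · rcases Fin.eq_castSucc_or_eq_last y with ⟨y', rfl⟩ | rfl
            · refine Or.inr ?_
              simp only [matN, rowf, colf, Matrix.of_apply, Fin.snoc_castSucc, hi_mk]
              exact max_lt (embK_lt E hE _ x') (embK_lt E hE _ y')
            · refine Or.inl (Or.inr ?_)
              refine ⟨embK E (hi v) x', hi v, embK_edge E _ x', ?_⟩
              simp [matN, rowf, colf, Fin.snoc_castSucc, Fin.snoc_last]
          · rcases Fin.eq_castSucc_or_eq_last y with ⟨y', rfl⟩ | rfl
            · refine Or.inr ?_
              simp only [matN, rowf, colf, Matrix.of_apply, Fin.snoc_castSucc, Fin.snoc_last, hi_mk]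
              exact max_lt hlh (embK_lt E hE _ y')
            · exact absurd ⟨rfl, rfl⟩ hxy
      show (if h : FreeV E v then _ else _) = (if h : FreeV E v then _ else _)
      rw [dif_neg h, dif_neg h, hA, hN]

def phi : Sym2 (Fin n) → KK E := approx E n

lemma phi_free {v : Sym2 (Fin n)} (h : FreeV E v) : phi E v = iSZ E (X ⟨v, h⟩) :=
  approx_free E h n

lemma phi_spec (hE : ∀ i j, E i j → i < j) {v : Sym2 (Fin n)} (h : ¬ FreeV E v) :
    phi E v = - (Matrix.det (matA E (phi E) (hi v)))⁻¹
        * Matrix.det (cornerZero (matN E (phi E) (lo v) (hi v))) := by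
  have hpos : 0 < n := (hi v).pos
  have hvn : (hi v : ℕ) < n := (hi v).isLt
  have hlh : lo v < hi v := lo_lt_hi_of_not_isDiag (fun hd => h (Or.inl hd))
  have hn1 : n - 1 + 1 = n := by omega
  have h1 : phi E v = approx E (n - 1 + 1) v := by rw [hn1]; rfl
  have key : ∀ w : Sym2 (Fin n), (FreeV E w ∨ (hi w : ℕ) < (hi v : ℕ)) →
      approx E (n - 1) w = approx E n w := by
    rintro w (hw | hw)
    · rw [approx_free E hw, approx_free E hw]
    · exact approx_stable E hE n w (n-1) n (by omega) (by omega) (by omega)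
  have hA : matA E (approx E (n-1)) (hi v) = matA E (phi E) (hi v) := by
    ext x y
    exact key _ (Or.inr (by
      simp only [hi_mk]
      exact max_lt (embK_lt E hE (hi v) x) (embK_lt E hE (hi v) y)))
  have hN : cornerZero (matN E (approx E (n-1)) (lo v) (hi v))
      = cornerZero (matN E (phi E) (lo v) (hi v)) := by
    ext x y
    by_cases hxy : x = Fin.last _ ∧ y = Fin.last _
    · simp [cornerZero, hxy]
    · simp only [cornerZero, Matrix.of_apply, if_neg hxy]
      refine key _ ?_
      rcases Fin.eq_castSucc_or_eq_last x with ⟨x', rfl⟩ | rfl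
      · rcases Fin.eq_castSucc_or_eq_last y with ⟨y', rfl⟩ | rfl
        · refine Or.inr ?_
          simp only [matN, rowf, colf, Matrix.of_apply, Fin.snoc_castSucc, hi_mk]
          exact max_lt (embK_lt E hE _ x') (embK_lt E hE _ y')
        · refine Or.inl (Or.inr ?_)
          refine ⟨embK E (hi v) x', hi v, embK_edge E _ x', ?_⟩
          simp [matN, rowf, colf, Fin.snoc_castSucc, Fin.snoc_last]
      · rcases Fin.eq_castSucc_or_eq_last y with ⟨y', rfl⟩ | rfl
        · refine Or.inr ?_
          simp only [matN, rowf, colf, Matrix.of_apply, Fin.snoc_castSucc, Fin.snoc_last, hi_mk]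
          exact max_lt hlh (embK_lt E hE _ y')
        · exact absurd ⟨rfl, rfl⟩ hxy
  rw [h1]
  show (if hf : FreeV E v then _ else _) = _
  rw [dif_neg h, hA, hN]

/-- the evaluation point: diagonal variables to 1, edge variables to 0. -/
def pt : {v : Sym2 (Fin n) // FreeV E v} → ℂ := fun u => if u.1.IsDiag then 1 else 0

def ev : SZ E →ₐ[ℂ] ℂ := aeval (pt E)

/-- `Pval x c` : `x` is a fraction whose denominator does not vanish at the point,
and whose value at the point is `c`. -/
def Pval (x : KK E) (c : ℂ) : Prop :=
  ∃ a b : SZ E, ev E b ≠ 0 ∧ ev E a = c * ev E b ∧ x * iSZ E b = iSZ E a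

lemma Pval_iSZ (s : SZ E) : Pval E (iSZ E s) (ev E s) :=
  ⟨s, 1, by simp, by simp, by simp⟩

lemma Pval_zero : Pval E 0 0 := by simpa using Pval_iSZ E 0

lemma Pval_add {x x' : KK E} {c c' : ℂ} (hx : Pval E x c) (hx' : Pval E x' c') :
    Pval E (x + x') (c + c') := by
  obtain ⟨a, b, hb, ha, hab⟩ := hx
  obtain ⟨a', b', hb', ha', hab'⟩ := hx'
  refine ⟨a * b' + a' * b, b * b', by simp [hb, hb'], by simp [ha, ha']; ring, ?_⟩
  have : (x + x') * iSZ E (b * b') = (x * iSZ E b) * iSZ E b' + (x' * iSZ E b') * iSZ E b := by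
    rw [_root_.map_mul]; ring
  rw [this, hab, hab', _root_.map_add, _root_.map_mul, _root_.map_mul]

lemma Pval_mul {x x' : KK E} {c c' : ℂ} (hx : Pval E x c) (hx' : Pval E x' c') :
    Pval E (x * x') (c * c') := by
  obtain ⟨a, b, hb, ha, hab⟩ := hx
  obtain ⟨a', b', hb', ha', hab'⟩ := hx'
  refine ⟨a * a', b * b', by simp [hb, hb'], by simp [ha, ha']; ring, ?_⟩
  have : (x * x') * iSZ E (b * b') = (x * iSZ E b) * (x' * iSZ E b') := by
    rw [_root_.map_mul]; ring
  rw [this, hab, hab', _root_.map_mul]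

lemma Pval_neg {x : KK E} {c : ℂ} (hx : Pval E x c) : Pval E (-x) (-c) := by
  obtain ⟨a, b, hb, ha, hab⟩ := hx
  exact ⟨-a, b, hb, by simp [ha], by rw [_root_.map_neg, ← hab]; ring⟩

lemma Pval_intCast (z : ℤ) : Pval E ((z : ℤ) : KK E) ((z : ℤ) : ℂ) := by
  have := Pval_iSZ E ((z : ℤ) : SZ E)
  rwa [_root_.map_intCast, _root_.map_intCast] at this

lemma Pval_unique {x : KK E} {c c' : ℂ} (hx : Pval E x c) (hx' : Pval E x c') : c = c' := by
  obtain ⟨a, b, hb, ha, hab⟩ := hx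
  obtain ⟨a', b', hb', ha', hab'⟩ := hx'
  have hinj : Function.Injective (iSZ E) := IsFractionRing.injective (SZ E) (KK E)
  have h1 : iSZ E (a * b') = iSZ E (a' * b) := by
    rw [_root_.map_mul, _root_.map_mul, ← hab, ← hab']; ring
  have h2 : a * b' = a' * b := hinj h1
  have h3 : ev E a * ev E b' = ev E a' * ev E b := by
    rw [← _root_.map_mul, ← _root_.map_mul, h2]
  rw [ha, ha'] at h3
  have : (c - c') * (ev E b * ev E b') = 0 := by ring_nf; linear_combination h3
  rcases mul_eq_zero.1 this with h | h
  · exact sub_eq_zero.1 h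
  · exact absurd h (by simp [hb, hb'])

lemma Pval_ne_zero {x : KK E} {c : ℂ} (hx : Pval E x c) (hc : c ≠ 0) : x ≠ 0 := by
  obtain ⟨a, b, hb, ha, hab⟩ := hx
  intro h0
  rw [h0, zero_mul] at hab
  have : a = 0 := by
    have hinj : Function.Injective (iSZ E) := IsFractionRing.injective (SZ E) (KK E)
    have : iSZ E 0 = iSZ E a := by rw [_root_.map_zero, hab]
    exact (hinj this).symm
  rw [this, _root_.map_zero] at ha
  exact hc (by
    rcases mul_eq_zero.1 ha.symm with h | h
    · exact h
    · exact absurd h hb)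

lemma Pval_inv {x : KK E} {c : ℂ} (hx : Pval E x c) (hc : c ≠ 0) : Pval E x⁻¹ c⁻¹ := by
  have hx0 : x ≠ 0 := Pval_ne_zero E hx hc
  obtain ⟨a, b, hb, ha, hab⟩ := hx
  have hea : ev E a ≠ 0 := by rw [ha]; exact mul_ne_zero hc hb
  refine ⟨b, a, hea, ?_, ?_⟩
  · rw [ha]; field_simp
  · have : x⁻¹ * (x * iSZ E b) = x⁻¹ * iSZ E a := by rw [hab]
    rw [← mul_assoc, inv_mul_cancel₀ hx0, one_mul] at this
    exact this.symm

lemma Pval_sum {ι : Type*} (s : Finset ι) (f : ι → KK E) (g : ι → ℂ)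
    (h : ∀ i ∈ s, Pval E (f i) (g i)) : Pval E (∑ i ∈ s, f i) (∑ i ∈ s, g i) := by
  classical
  induction s using Finset.induction_on with
  | empty => simpa using Pval_zero E
  | insert a s hni ih =>
    rw [Finset.sum_insert hni, Finset.sum_insert hni]
    exact Pval_add E (h a (Finset.mem_insert_self a s))
      (ih (fun i hi => h i (Finset.mem_insert_of_mem hi)))

lemma Pval_prod {ι : Type*} (s : Finset ι) (f : ι → KK E) (g : ι → ℂ)
    (h : ∀ i ∈ s, Pval E (f i) (g i)) : Pval E (∏ i ∈ s, f i) (∏ i ∈ s, g i) := by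
  classical
  induction s using Finset.induction_on with
  | empty => simpa using Pval_iSZ E 1
  | insert a s hni ih =>
    rw [Finset.prod_insert hni, Finset.prod_insert hni]
    exact Pval_mul E (h a (Finset.mem_insert_self a s))
      (ih (fun i hi => h i (Finset.mem_insert_of_mem hi)))

lemma Pval_det {k : ℕ} (M : Matrix (Fin k) (Fin k) (KK E)) (C : Matrix (Fin k) (Fin k) ℂ)
    (h : ∀ i j, Pval E (M i j) (C i j)) : Pval E M.det C.det := by
  rw [Matrix.det_apply', Matrix.det_apply']
  refine Pval_sum E _ _ _ (fun σ _ => ?_)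
  exact Pval_mul E (Pval_intCast E _) (Pval_prod E _ _ _ (fun i _ => h _ _))

def zeta (v : Sym2 (Fin n)) : ℂ := if v.IsDiag then 1 else 0

lemma Pval_phi_free {v : Sym2 (Fin n)} (h : FreeV E v) : Pval E (phi E v) (zeta v) := by
  rw [phi_free E h]
  have := Pval_iSZ E (X ⟨v, h⟩)
  have hev : ev E (X (⟨v, h⟩ : {v : Sym2 (Fin n) // FreeV E v})) = zeta v := by
    simp [ev, pt, zeta]
  rwa [hev] at this

lemma zeta_mk (a b : Fin n) : zeta (Sym2.mk a b) = if a = b then 1 else 0 := by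
  simp [zeta, Sym2.mk_isDiag_iff]

lemma embK_inj (j : Fin n) : Function.Injective (embK E j) :=
  fun x y hxy => ((parents E j).orderEmbOfFin rfl).injective hxy

lemma Pval_phi (hE : ∀ i j, E i j → i < j) : ∀ v : Sym2 (Fin n), Pval E (phi E v) (zeta v) := by
  have main : ∀ (t : ℕ) (v : Sym2 (Fin n)), (hi v : ℕ) ≤ t → Pval E (phi E v) (zeta v) := by
    intro t
    induction t with
    | zero =>
      intro v hv
      by_cases h : FreeV E v
      · exact Pval_phi_free E h
      · exfalso
        have h2 : (lo v : ℕ) < (hi v : ℕ) := lo_lt_hi_of_not_isDiag (fun hd => h (Or.inl hd))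
        omega
    | succ t ih =>
      intro v hv
      by_cases h : FreeV E v
      · exact Pval_phi_free E h
      · have hdne : ¬ v.IsDiag := fun hd => h (Or.inl hd)
        have hlh : lo v < hi v := lo_lt_hi_of_not_isDiag hdne
        rw [phi_spec E hE h]
        have hAp : Pval E (Matrix.det (matA E (phi E) (hi v))) 1 := by
          have h1 : Pval E (Matrix.det (matA E (phi E) (hi v)))
              (Matrix.det (1 : Matrix (Fin (kc E (hi v))) (Fin (kc E (hi v))) ℂ)) := by
            refine Pval_det E _ _ (fun x y => ?_)
            have hw : (hi (Sym2.mk (embK E (hi v) x) (embK E (hi v) y)) : ℕ) < (hi v : ℕ) := by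
              rw [hi_mk]
              exact max_lt (embK_lt E hE (hi v) x) (embK_lt E hE (hi v) y)
            have hp := ih (Sym2.mk (embK E (hi v) x) (embK E (hi v) y)) (by omega)
            have hz : zeta (Sym2.mk (embK E (hi v) x) (embK E (hi v) y))
                = (1 : Matrix (Fin (kc E (hi v))) (Fin (kc E (hi v))) ℂ) x y := by
              rw [zeta_mk, Matrix.one_apply]
              by_cases hxy : x = y
              · simp [hxy]
              · rw [if_neg (fun hc => hxy (embK_inj E _ hc)), if_neg hxy]
            rw [← hz]
            exact hp
          rwa [Matrix.det_one] at h1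
        have hNp : Pval E (Matrix.det (cornerZero (matN E (phi E) (lo v) (hi v)))) 0 := by
          set C : Matrix (Fin (kc E (hi v) + 1)) (Fin (kc E (hi v) + 1)) ℂ :=
            cornerZero (Matrix.of fun x y =>
              zeta (Sym2.mk (rowf E (lo v) (hi v) x) (colf E (hi v) y))) with hC
          have h1 : Pval E (Matrix.det (cornerZero (matN E (phi E) (lo v) (hi v)))) C.det := by
            refine Pval_det E _ _ (fun x y => ?_)
            by_cases hxy : x = Fin.last _ ∧ y = Fin.last _
            · simp only [cornerZero, C, Matrix.of_apply, if_pos hxy]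
              exact Pval_zero E
            · simp only [cornerZero, C, Matrix.of_apply, if_neg hxy, matN]
              rcases Fin.eq_castSucc_or_eq_last x with ⟨x', rfl⟩ | rfl
              · rcases Fin.eq_castSucc_or_eq_last y with ⟨y', rfl⟩ | rfl
                · refine ih _ ?_
                  simp only [rowf, colf, Fin.snoc_castSucc, hi_mk]
                  have := max_lt (embK_lt E hE _ x') (embK_lt E hE _ y')
                  omega
                · refine Pval_phi_free E ?_
                  refine Or.inr ⟨embK E (hi v) x', hi v, embK_edge E _ x', ?_⟩
                  simp [rowf, colf, Fin.snoc_castSucc, Fin.snoc_last]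
              · rcases Fin.eq_castSucc_or_eq_last y with ⟨y', rfl⟩ | rfl
                · refine ih _ ?_
                  simp only [rowf, colf, Fin.snoc_castSucc, Fin.snoc_last, hi_mk]
                  have := max_lt hlh (embK_lt E hE _ y')
                  omega
                · exact absurd ⟨rfl, rfl⟩ hxy
          have hCdet : C.det = 0 := by
            refine Matrix.det_eq_zero_of_column_eq_zero (Fin.last _) (fun x => ?_)
            rcases Fin.eq_castSucc_or_eq_last x with ⟨x', rfl⟩ | rfl
            · simp only [C, cornerZero, Matrix.of_apply]
              rw [if_neg (fun hc => (Fin.castSucc_lt_last x').ne hc.1)]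
              simp only [rowf, colf, Fin.snoc_castSucc, Fin.snoc_last]
              rw [zeta_mk, if_neg (ne_of_lt (embK_lt E hE _ x'))]
            · simp [C, cornerZero]
          rwa [hCdet] at h1
        have hres := Pval_mul E (Pval_neg E (Pval_inv E hAp one_ne_zero)) hNp
        have hzv : zeta v = 0 := by simp [zeta, hdne]
        rw [hzv]
        convert hres using 1
        norm_num
  intro v
  exact main (hi v : ℕ) v le_rfl

lemma Pval_pminor (hE : ∀ i j, E i j → i < j) (A : Finset (Fin n)) :
    Pval E (Matrix.det (Matrix.of fun x y : Fin A.card =>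
      phi E (Sym2.mk (A.orderEmbOfFin rfl x) (A.orderEmbOfFin rfl y)))) 1 := by
  have h1 : Pval E (Matrix.det (Matrix.of fun x y : Fin A.card =>
      phi E (Sym2.mk (A.orderEmbOfFin rfl x) (A.orderEmbOfFin rfl y))))
      (Matrix.det (1 : Matrix (Fin A.card) (Fin A.card) ℂ)) := by
    refine Pval_det E _ _ (fun x y => ?_)
    have hz : zeta (Sym2.mk (A.orderEmbOfFin rfl x) (A.orderEmbOfFin rfl y))
        = (1 : Matrix (Fin A.card) (Fin A.card) ℂ) x y := by
      rw [zeta_mk, Matrix.one_apply]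
      by_cases hxy : x = y
      · simp [hxy]
      · rw [if_neg (fun hc => hxy ((A.orderEmbOfFin rfl).injective hc)), if_neg hxy]
    rw [← hz]
    exact Pval_phi E hE _
  rwa [Matrix.det_one] at h1

lemma det_matA_ne_zero (hE : ∀ i j, E i j → i < j) (j : Fin n) :
    Matrix.det (matA E (phi E) j) ≠ 0 :=
  Pval_ne_zero E (Pval_pminor E hE (parents E j)) one_ne_zero

def PhiA : MvPolynomial (Sym2 (Fin n)) ℂ →ₐ[ℂ] KK E := aeval (phi E)

lemma PhiA_det {k : ℕ} (f g : Fin k → Fin n) :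
    PhiA E (Matrix.det (Matrix.of fun x y : Fin k => (X (Sym2.mk (f x) (g y)) :
      MvPolynomial (Sym2 (Fin n)) ℂ))) =
    Matrix.det (Matrix.of fun x y : Fin k => phi E (Sym2.mk (f x) (g y))) := by
  rw [AlgHom.map_det]
  congr 1
  ext x y
  simp [PhiA, AlgHom.mapMatrix_apply]

lemma PhiA_fminor (A B : Finset (Fin n)) (h : B.card = A.card) :
    PhiA E (fminor (genMat n) A B h) =
    Matrix.det (Matrix.of fun x y : Fin A.card =>
      phi E (Sym2.mk (A.orderEmbOfFin rfl x) (B.orderEmbOfFin h y))) := by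
  exact PhiA_det E _ _

lemma PhiA_pminor_ne_zero (hE : ∀ i j, E i j → i < j) (A : Finset (Fin n)) :
    PhiA E (fminor (genMat n) A A rfl) ≠ 0 := by
  rw [PhiA_fminor]
  exact Pval_ne_zero E (Pval_pminor E hE A) one_ne_zero

lemma PhiA_theta_ne_zero (hE : ∀ i j, E i j → i < j) :
    PhiA E (∏ A : Finset (Fin n), fminor (genMat n) A A rfl) ≠ 0 := by
  rw [map_prod]
  exact Finset.prod_ne_zero_iff.2 (fun A _ => PhiA_pminor_ne_zero E hE A)

lemma not_freeV (hE : ∀ i j, E i j → i < j) {i j : Fin n} (hij : i < j) (hnE : ¬ E i j) :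
    ¬ FreeV E (Sym2.mk i j) := by
  rintro (hd | ⟨i', j', he, heq⟩)
  · exact hij.ne (Sym2.mk_isDiag_iff.1 hd)
  · rcases Sym2.eq_iff.1 heq with ⟨rfl, rfl⟩ | ⟨rfl, rfl⟩
    · exact hnE he
    · exact absurd (hE _ _ he) (not_lt.2 hij.le)

lemma rowf_mem {i j : Fin n} (hnE : ¬ E i j) (z : Fin (kc E j + 1)) :
    rowf E i j z ∈ insert i (parents E j) := by
  rcases Fin.eq_castSucc_or_eq_last z with ⟨z', rfl⟩ | rfl
  · exact Finset.mem_insert_of_mem (by simpa [rowf, Fin.snoc_castSucc] using embK_mem E j z')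
  · simp [rowf, Fin.snoc_last]

lemma colf_mem {j : Fin n} (z : Fin (kc E j + 1)) :
    colf E j z ∈ insert j (parents E j) := by
  rcases Fin.eq_castSucc_or_eq_last z with ⟨z', rfl⟩ | rfl
  · exact Finset.mem_insert_of_mem (by simpa [colf, Fin.snoc_castSucc] using embK_mem E j z')
  · simp [colf, Fin.snoc_last]

lemma snoc_inj {i j : Fin n} (hi : i ∉ parents E j) : Function.Injective (rowf E i j) := by
  intro x y hxy
  rcases Fin.eq_castSucc_or_eq_last x with ⟨x', rfl⟩ | rfl <;>
    rcases Fin.eq_castSucc_or_eq_last y with ⟨y', rfl⟩ | rfl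
  · simp only [rowf, Fin.snoc_castSucc] at hxy
    exact congrArg Fin.castSucc (embK_inj E j hxy)
  · rw [rowf] at hxy
    simp only [Fin.snoc_castSucc, Fin.snoc_last] at hxy
    exact absurd (hxy ▸ embK_mem E j x') hi
  · rw [rowf] at hxy
    simp only [Fin.snoc_castSucc, Fin.snoc_last] at hxy
    exact absurd (hxy ▸ embK_mem E j y') hi
  · rfl

lemma colf_inj {j : Fin n} (hj : j ∉ parents E j) : Function.Injective (colf E j) :=
  snoc_inj E hj

lemma i_not_mem_parents {i j : Fin n} (hnE : ¬ E i j) : i ∉ parents E j := by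
  simp [parents, hnE]

lemma j_not_mem_parents (hE : ∀ i j, E i j → i < j) (j : Fin n) : j ∉ parents E j := by
  intro hmem
  simp only [parents, Finset.mem_filter] at hmem
  exact absurd (hE _ _ hmem.2) (lt_irrefl j)

lemma PhiA_gen_zero (hE : ∀ i j, E i j → i < j) {i j : Fin n} (hij : i < j) (hnE : ¬ E i j)
    (h : (insert j (parents E j)).card = (insert i (parents E j)).card) :
    PhiA E (fminor (genMat n) (insert i (parents E j)) (insert j (parents E j)) h)
      = 0 := by
  have hiK : i ∉ parents E j := i_not_mem_parents E hnE
  have hjK : j ∉ parents E j := j_not_mem_parents E hE j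
  have hcardi : (insert i (parents E j)).card = kc E j + 1 :=
    Finset.card_insert_of_notMem hiK
  set MΦ : Matrix (Fin n) (Fin n) (KK E) :=
    Matrix.of fun a b => phi E (Sym2.mk a b) with hMΦ
  have step1 : PhiA E (fminor (genMat n) (insert i (parents E j))
      (insert j (parents E j)) h) = fminor MΦ (insert i (parents E j))
      (insert j (parents E j)) h := by
    rw [PhiA_fminor]
    rfl
  obtain ⟨ε, hε2, hεeq⟩ := fminor_eq_sign_mul MΦ (insert i (parents E j))
    (insert j (parents E j)) h
    (fun x => rowf E i j (Fin.cast hcardi x)) (fun x => colf E j (Fin.cast hcardi x))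
    (fun x => rowf_mem E hnE _) (fun x => colf_mem E _)
    (fun x y hxy => by
      have := snoc_inj E hiK hxy
      exact Fin.cast_injective _ this)
    (fun x y hxy => by
      have := colf_inj E hjK hxy
      exact Fin.cast_injective _ this)
  have step3 : (Matrix.of fun x y => MΦ (rowf E i j (Fin.cast hcardi x))
      (colf E j (Fin.cast hcardi y))).det = (matN E (phi E) i j).det := by
    have heq : (Matrix.of fun x y => MΦ (rowf E i j (Fin.cast hcardi x))
        (colf E j (Fin.cast hcardi y)))
        = (matN E (phi E) i j).submatrix (finCongr hcardi) (finCongr hcardi) := by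
      ext x y
      simp [matN, MΦ]
    rw [heq]
    exact Matrix.det_submatrix_equiv_self _ _
  have step4 : (matN E (phi E) i j).det
      = phi E (Sym2.mk i j) * (matA E (phi E) j).det
        + (cornerZero (matN E (phi E) i j)).det := by
    have hc := det_corner (matN E (phi E) i j)
    have hcorner : matN E (phi E) i j (Fin.last _) (Fin.last _) = phi E (Sym2.mk i j) := by
      simp [matN, rowf, colf, Fin.snoc_last]
    have hsub : (matN E (phi E) i j).submatrix Fin.castSucc Fin.castSucc
        = matA E (phi E) j := by
      ext x y
      simp [matN, matA, rowf, colf, Fin.snoc_castSucc]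
    rw [hcorner, hsub] at hc
    exact hc
  have hv : ¬ FreeV E (Sym2.mk i j) := not_freeV E hE hij hnE
  have hspec := phi_spec E hE hv
  have hlo : lo (Sym2.mk i j) = i := by rw [lo_mk]; exact min_eq_left hij.le
  have hhi : hi (Sym2.mk i j) = j := by rw [hi_mk]; exact max_eq_right hij.le
  rw [hlo, hhi] at hspec
  have hAne : (matA E (phi E) j).det ≠ 0 := det_matA_ne_zero E hE j
  have hzero : (matN E (phi E) i j).det = 0 := by
    rw [step4, hspec]
    have h2 := inv_mul_cancel₀ hAne
    linear_combination (-(cornerZero (matN E (phi E) i j)).det) * h2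
  rw [step1, hεeq, step3, hzero, mul_zero]

abbrev Aq := MvPolynomial (Sym2 (Fin n)) ℂ ⧸ impIdeal E

def tq : Aq E := Ideal.Quotient.mk _ (theta0 n)

abbrev Lq := Localization.Away (tq E)

def qh : MvPolynomial (Sym2 (Fin n)) ℂ →+* Lq E :=
  (algebraMap (Aq E) (Lq E)).comp (Ideal.Quotient.mk (impIdeal E))

lemma qh_theta_isUnit : IsUnit (qh E (theta0 n)) :=
  IsLocalization.Away.algebraMap_isUnit (S := Lq E) (tq E)

lemma qh_mem_zero {f : MvPolynomial (Sym2 (Fin n)) ℂ} (hf : f ∈ impIdeal E) :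
    qh E f = 0 := by
  have : Ideal.Quotient.mk (impIdeal E) f = 0 := Ideal.Quotient.eq_zero_iff_mem.2 hf
  simp [qh, this]

lemma qh_eq_zero_iff (f : MvPolynomial (Sym2 (Fin n)) ℂ) :
    qh E f = 0 ↔ ∃ m : ℕ, theta0 n ^ m * f ∈ impIdeal E := by
  rw [qh, RingHom.comp_apply]
  rw [IsLocalization.map_eq_zero_iff (Submonoid.powers (tq E)) (Lq E)]
  constructor
  · rintro ⟨⟨m, hm⟩, hmf⟩
    obtain ⟨k, rfl⟩ := (Submonoid.mem_powers_iff _ _).1 hm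
    refine ⟨k, ?_⟩
    rw [← Ideal.Quotient.eq_zero_iff_mem, _root_.map_mul, map_pow]
    exact hmf
  · rintro ⟨m, hm⟩
    refine ⟨⟨tq E ^ m, Submonoid.pow_mem _ (Submonoid.mem_powers _) m⟩, ?_⟩
    have := Ideal.Quotient.eq_zero_iff_mem.2 hm
    rw [_root_.map_mul, map_pow] at this
    exact this

lemma impIdeal_le_ker (hE : ∀ i j, E i j → i < j) :
    impIdeal E ≤ RingHom.ker (PhiA E).toRingHom := by
  rw [impIdeal]
  refine Ideal.span_le.2 ?_
  rintro f ⟨i, j, hij, hnE, h, rfl⟩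
  rw [SetLike.mem_coe, RingHom.mem_ker]
  exact PhiA_gen_zero E hE hij hnE h

def Phibar (hE : ∀ i j, E i j → i < j) : Aq E →+* KK E :=
  Ideal.Quotient.lift (impIdeal E) (PhiA E).toRingHom
    (fun a ha => RingHom.mem_ker.1 (impIdeal_le_ker E hE ha))

lemma Phibar_tq_isUnit (hE : ∀ i j, E i j → i < j) : IsUnit (Phibar E hE (tq E)) := by
  rw [Phibar, tq, Ideal.Quotient.lift_mk]
  exact isUnit_iff_ne_zero.2 (PhiA_theta_ne_zero E hE)

def psi (hE : ∀ i j, E i j → i < j) : Lq E →+* KK E :=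
  IsLocalization.Away.lift (S := Lq E) (tq E) (Phibar_tq_isUnit E hE)

lemma psi_qh (hE : ∀ i j, E i j → i < j) (x : MvPolynomial (Sym2 (Fin n)) ℂ) :
    psi E hE (qh E x) = PhiA E x := by
  rw [qh, RingHom.comp_apply, psi]
  rw [IsLocalization.Away.lift_eq]
  rw [Phibar, Ideal.Quotient.lift_mk]
  rfl

/-- the natural embedding of the free polynomial ring into the big polynomial ring -/
def iota : SZ E →ₐ[ℂ] MvPolynomial (Sym2 (Fin n)) ℂ :=
  aeval (fun u : {v : Sym2 (Fin n) // FreeV E v} => (X u.1 : MvPolynomial (Sym2 (Fin n)) ℂ))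

lemma PhiA_iota (s : SZ E) : PhiA E (iota E s) = iSZ E s := by
  have : (PhiA E).comp (iota E) = (IsScalarTower.toAlgHom ℂ (SZ E) (KK E)) := by
    refine MvPolynomial.algHom_ext (fun u => ?_)
    simp only [AlgHom.comp_apply, iota, aeval_X, IsScalarTower.toAlgHom_apply]
    have : PhiA E (X u.1) = phi E u.1 := aeval_X _ _
    rw [this, phi_free E u.2]
    rfl
  have h2 := DFunLike.congr_fun this s
  simpa [iSZ] using h2

/-- The subalgebra of elements that, up to a unit denominator from the free subring,
agree with a free-subring element in the localized quotient. -/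
def Dsub : Subalgebra ℂ (MvPolynomial (Sym2 (Fin n)) ℂ) where
  carrier := {x | ∃ a b : SZ E, IsUnit (qh E (iota E b)) ∧
    qh E (iota E b) * qh E x = qh E (iota E a)}
  mul_mem' := by
    rintro x y ⟨a, b, hub, hab⟩ ⟨a', b', hub', hab'⟩
    refine ⟨a * a', b * b', ?_, ?_⟩
    · rw [_root_.map_mul, _root_.map_mul]; exact hub.mul hub'
    · simp only [_root_.map_mul]
      calc qh E (iota E b) * qh E (iota E b') * (qh E x * qh E y)
          = (qh E (iota E b) * qh E x) * (qh E (iota E b') * qh E y) := by ring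
        _ = qh E (iota E a) * qh E (iota E a') := by rw [hab, hab']
  add_mem' := by
    rintro x y ⟨a, b, hub, hab⟩ ⟨a', b', hub', hab'⟩
    refine ⟨a * b' + a' * b, b * b', ?_, ?_⟩
    · rw [_root_.map_mul, _root_.map_mul]; exact hub.mul hub'
    · simp only [_root_.map_mul, _root_.map_add]
      calc qh E (iota E b) * qh E (iota E b') * (qh E x + qh E y)
          = (qh E (iota E b) * qh E x) * qh E (iota E b')
            + (qh E (iota E b') * qh E y) * qh E (iota E b) := by ring
        _ = qh E (iota E a) * qh E (iota E b') + qh E (iota E a') * qh E (iota E b) := by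
            rw [hab, hab']
  algebraMap_mem' := by
    intro c
    refine ⟨algebraMap ℂ (SZ E) c, 1, ?_, ?_⟩
    · rw [_root_.map_one, _root_.map_one]; exact isUnit_one
    · rw [_root_.map_one, _root_.map_one, one_mul, AlgHom.commutes]

lemma X_free_mem_D {w : Sym2 (Fin n)} (h : FreeV E w) : (X w : MvPolynomial (Sym2 (Fin n)) ℂ) ∈ Dsub E := by
  refine ⟨X ⟨w, h⟩, 1, ?_, ?_⟩
  · rw [_root_.map_one, _root_.map_one]; exact isUnit_one
  · rw [_root_.map_one, _root_.map_one, one_mul, iota, aeval_X]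

lemma detAR_dvd_theta (j : Fin n) :
    fminor (genMat n) (parents E j) (parents E j) rfl ∣ theta0 n :=
  Finset.dvd_prod_of_mem (fun A => fminor (genMat n) A A rfl)
    (Finset.mem_univ (parents E j))

lemma qh_detAR_isUnit (j : Fin n) :
    IsUnit (qh E (fminor (genMat n) (parents E j) (parents E j) rfl)) := by
  obtain ⟨u, hu⟩ := detAR_dvd_theta E j
  have := qh_theta_isUnit E
  rw [hu, _root_.map_mul] at this
  exact isUnit_of_mul_isUnit_left this

lemma X_mem_D (hE : ∀ i j, E i j → i < j) : ∀ v : Sym2 (Fin n), (X v : MvPolynomial (Sym2 (Fin n)) ℂ) ∈ Dsub E := by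
  have main : ∀ (t : ℕ) (v : Sym2 (Fin n)), (hi v : ℕ) ≤ t →
      (X v : MvPolynomial (Sym2 (Fin n)) ℂ) ∈ Dsub E := by
    intro t
    induction t with
    | zero =>
      intro v hv
      by_cases h : FreeV E v
      · exact X_free_mem_D E h
      · exfalso
        have h2 : (lo v : ℕ) < (hi v : ℕ) := lo_lt_hi_of_not_isDiag (fun hd => h (Or.inl hd))
        omega
    | succ t ih =>
      intro v hv
      by_cases h : FreeV E v
      · exact X_free_mem_D E h
      · have hdne : ¬ v.IsDiag := fun hd => h (Or.inl hd)
        have hlh : lo v < hi v := lo_lt_hi_of_not_isDiag hdne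
        set i := lo v with hio
        set j := hi v with hjo
        have hnE : ¬ E i j := by
          intro he
          exact h (Or.inr ⟨i, j, he, (mk_lo_hi v).symm⟩)
        have hiK : i ∉ parents E j := i_not_mem_parents E hnE
        have hjK : j ∉ parents E j := j_not_mem_parents E hE j
        have hcardi : (insert i (parents E j)).card = kc E j + 1 :=
          Finset.card_insert_of_notMem hiK
        have hcardj : (insert j (parents E j)).card = kc E j + 1 :=
          Finset.card_insert_of_notMem hjK
        have h' : (insert j (parents E j)).card = (insert i (parents E j)).card := by
          rw [hcardi, hcardj]
        -- the generator lies in the ideal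
        have hgen : fminor (genMat n) (insert i (parents E j))
            (insert j (parents E j)) h' ∈ impIdeal E := by
          refine Ideal.subset_span ?_
          exact ⟨i, j, hlh, hnE, h', rfl⟩
        have hq0 : qh E (fminor (genMat n) (insert i (parents E j))
            (insert j (parents E j)) h') = 0 := qh_mem_zero E hgen
        -- sign lemma
        obtain ⟨ε, hε2, hεeq⟩ := fminor_eq_sign_mul (genMat n)
          (insert i (parents E j)) (insert j (parents E j)) h'
          (fun x => rowf E i j (Fin.cast hcardi x)) (fun x => colf E j (Fin.cast hcardi x))
          (fun x => rowf_mem E hnE _) (fun x => colf_mem E _)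
          (fun x y hxy => Fin.cast_injective _ (snoc_inj E hiK hxy))
          (fun x y hxy => Fin.cast_injective _ (colf_inj E hjK hxy))
        set NR : Matrix (Fin (kc E j + 1)) (Fin (kc E j + 1)) (MvPolynomial (Sym2 (Fin n)) ℂ) :=
          Matrix.of fun x y => genMat n (rowf E i j x) (colf E j y) with hNR
        have step3 : (Matrix.of fun x y => genMat n (rowf E i j (Fin.cast hcardi x))
            (colf E j (Fin.cast hcardi y))).det = NR.det := by
          have heq : (Matrix.of fun x y => genMat n (rowf E i j (Fin.cast hcardi x))
              (colf E j (Fin.cast hcardi y)))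
              = NR.submatrix (finCongr hcardi) (finCongr hcardi) := by
            ext x y
            simp [NR]
          rw [heq]
          exact Matrix.det_submatrix_equiv_self _ _
        have hfm : fminor (genMat n) (insert i (parents E j))
            (insert j (parents E j)) h' = ε * NR.det := by
          rw [hεeq, step3]
        have hqNR : qh E NR.det = 0 := by
          have h1 : qh E (ε * ε) = 1 := by rw [hε2, _root_.map_one]
          have h2 : qh E ε * qh E NR.det = 0 := by
            rw [← _root_.map_mul, ← hfm]
            exact hq0
          calc qh E NR.det = qh E (ε * ε) * qh E NR.det := by rw [h1, one_mul]
            _ = qh E ε * (qh E ε * qh E NR.det) := by rw [_root_.map_mul]; ring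
            _ = 0 := by rw [h2]; exact MulZeroClass.mul_zero (qh E ε)
        -- corner expansion
        have hcorner := det_corner NR
        have hNRll : NR (Fin.last _) (Fin.last _) = X v := by
          show genMat n (rowf E i j (Fin.last _)) (colf E j (Fin.last _)) = X v
          simp only [rowf, colf, Fin.snoc_last, Fin.snoc_last]
          show X (Sym2.mk (lo v) (hi v)) = X v
          rw [mk_lo_hi]
        have hAR : NR.submatrix Fin.castSucc Fin.castSucc
            = Matrix.of fun x y : Fin (kc E j) =>
                genMat n (embK E j x) (embK E j y) := by
          refine Matrix.ext fun x y => ?_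
          show genMat n (rowf E i j x.castSucc) (colf E j y.castSucc) = _
          simp only [rowf, colf, Fin.snoc_castSucc, Fin.snoc_castSucc]
          rfl
        have hARdet : (NR.submatrix Fin.castSucc Fin.castSucc).det
            = fminor (genMat n) (parents E j) (parents E j) rfl := by
          rw [hAR]; rfl
        have hrel : qh E (X v) * qh E (fminor (genMat n) (parents E j)
            (parents E j) rfl) = - qh E (cornerZero NR).det := by
          have hthis := congrArg (qh E) hcorner
          rw [hqNR, _root_.map_add, _root_.map_mul, hNRll, hARdet] at hthis
          have hthis' : qh E (X v) * qh E (fminor (genMat n) (parents E j)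
              (parents E j) rfl) + qh E (cornerZero NR).det = 0 := hthis.symm
          exact (add_eq_zero_iff_eq_neg (a := qh E (X v) * qh E (fminor (genMat n)
            (parents E j) (parents E j) rfl)) (b := qh E (cornerZero NR).det)).mp hthis' 
        -- membership of the two determinants
        have hXmem : ∀ (x y : Fin (kc E j)),
            (X (Sym2.mk (embK E j x) (embK E j y)) : MvPolynomial (Sym2 (Fin n)) ℂ) ∈ Dsub E := by
          intro x y
          refine ih _ ?_
          rw [hi_mk]
          have h9 : ((max (embK E j x) (embK E j y) : Fin n) : ℕ) < (j : ℕ) :=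
            max_lt (embK_lt E hE j x) (embK_lt E hE j y)
          omega
        have hARD : fminor (genMat n) (parents E j) (parents E j) rfl ∈ Dsub E := by
          rw [← hARdet, hAR]
          refine det_mem_subalgebra (Dsub E) _ (fun x y => ?_)
          exact hXmem x y
        have hN0D : (cornerZero NR).det ∈ Dsub E := by
          refine det_mem_subalgebra (Dsub E) _ (fun x y => ?_)
          by_cases hxy : x = Fin.last _ ∧ y = Fin.last _
          · simp only [cornerZero, Matrix.of_apply, if_pos hxy]
            exact Subalgebra.zero_mem _
          · simp only [cornerZero, Matrix.of_apply, if_neg hxy, NR]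
            rcases Fin.eq_castSucc_or_eq_last x with ⟨x', rfl⟩ | rfl
            · rcases Fin.eq_castSucc_or_eq_last y with ⟨y', rfl⟩ | rfl
              · show genMat n (rowf E i j x'.castSucc) (colf E j y'.castSucc) ∈ Dsub E
                simp only [rowf, colf, Fin.snoc_castSucc, Fin.snoc_castSucc]
                exact hXmem x' y'
              · show genMat n (rowf E i j x'.castSucc) (colf E j (Fin.last _)) ∈ Dsub E
                simp only [rowf, colf, Fin.snoc_castSucc, Fin.snoc_last]
                exact X_free_mem_D E (Or.inr ⟨embK E j x', j, embK_edge E j x', rfl⟩)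
            · rcases Fin.eq_castSucc_or_eq_last y with ⟨y', rfl⟩ | rfl
              · show genMat n (rowf E i j (Fin.last _)) (colf E j y'.castSucc) ∈ Dsub E
                simp only [rowf, colf, Fin.snoc_last, Fin.snoc_castSucc]
                refine ih _ ?_
                rw [hi_mk]
                have h9 : ((max i (embK E j y') : Fin n) : ℕ) < (j : ℕ) :=
                  max_lt hlh (embK_lt E hE j y')
                omega
              · exact absurd ⟨rfl, rfl⟩ hxy
        obtain ⟨a, b, hub, hab⟩ := hARD
        obtain ⟨a', b', hub', hab'⟩ := hN0D
        have hdetu : IsUnit (qh E (fminor (genMat n) (parents E j)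
            (parents E j) rfl)) := qh_detAR_isUnit E j
        have hua : IsUnit (qh E (iota E a)) := by
          rw [← hab]; exact hub.mul hdetu
        refine ⟨-(b * a'), a * b', ?_, ?_⟩
        · rw [_root_.map_mul, _root_.map_mul]
          exact hua.mul hub'
        · rw [_root_.map_mul, _root_.map_mul, _root_.map_neg, _root_.map_neg, _root_.map_mul,
            _root_.map_mul]
          calc qh E (iota E a) * qh E (iota E b') * qh E (X v)
              = (qh E (iota E b) * qh E (fminor (genMat n) (parents E j)
                  (parents E j) rfl)) * qh E (iota E b') * qh E (X v) := by rw [hab]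
            _ = qh E (iota E b) * qh E (iota E b')
                * (qh E (X v) * qh E (fminor (genMat n) (parents E j)
                    (parents E j) rfl)) := by ring
            _ = qh E (iota E b) * qh E (iota E b') * (- qh E (cornerZero NR).det) := by
                rw [hrel]
            _ = - (qh E (iota E b) * (qh E (iota E b') * qh E (cornerZero NR).det)) := by ring
            _ = - (qh E (iota E b) * qh E (iota E a')) := by rw [hab']
  intro v
  exact main (hi v : ℕ) v le_rfl

lemma D_eq_top (hE : ∀ i j, E i j → i < j) : Dsub E = ⊤ := by
  rw [eq_top_iff, ← MvPolynomial.adjoin_range_X]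
  refine Algebra.adjoin_le ?_
  rintro x ⟨v, rfl⟩
  exact X_mem_D E hE v

lemma ker_iff_sat (hE : ∀ i j, E i j → i < j) (f : MvPolynomial (Sym2 (Fin n)) ℂ) :
    PhiA E f = 0 ↔ ∃ m : ℕ, theta0 n ^ m * f ∈ impIdeal E := by
  constructor
  · intro hker
    have hf : f ∈ Dsub E := by rw [D_eq_top E hE]; trivial
    obtain ⟨a, b, hub, hab⟩ := hf
    have happ := congrArg (psi E hE) hab
    rw [_root_.map_mul, psi_qh, psi_qh, psi_qh, PhiA_iota, PhiA_iota, hker, MulZeroClass.mul_zero] at happ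
    have ha0 : a = 0 := by
      have hinj := IsFractionRing.injective (SZ E) (KK E)
      refine hinj ?_
      rw [_root_.map_zero]
      exact happ.symm
    rw [ha0, _root_.map_zero, _root_.map_zero] at hab
    have hq0 : qh E f = 0 := (IsUnit.mul_right_eq_zero hub).1 hab
    exact (qh_eq_zero_iff E f).1 hq0
  · rintro ⟨m, hm⟩
    have h1 : PhiA E (theta0 n ^ m * f) = 0 := by
      have h2 := impIdeal_le_ker E hE hm
      rwa [RingHom.mem_ker] at h2
    rw [_root_.map_mul, map_pow] at h1
    rcases mul_eq_zero.1 h1 with h | h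
    · exact absurd h (pow_ne_zero _ (PhiA_theta_ne_zero E hE))
    · exact h

end Main

lemma pow_mul_mem {R : Type*} [CommRing R] {I : Ideal R} {θ t : R} {m M : ℕ}
    (hm : θ ^ m * t ∈ I) (hle : m ≤ M) : θ ^ M * t ∈ I := by
  have h : θ ^ M * t = θ ^ (M - m) * (θ ^ m * t) := by
    rw [← mul_assoc, ← pow_add]
    congr 2
    omega
  rw [h]
  exact I.mul_mem_left _ hm

lemma uniform_bound {R : Type*} [CommRing R] (I : Ideal R) (θ : R) (T : Finset R)
    (h : ∀ t ∈ T, ∃ m : ℕ, θ ^ m * t ∈ I) : ∃ M : ℕ, ∀ t ∈ T, θ ^ M * t ∈ I := by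
  classical
  induction T using Finset.induction_on with
  | empty => exact ⟨0, fun t ht => absurd ht (Finset.notMem_empty t)⟩
  | insert a T hni ih =>
    obtain ⟨M', hM'⟩ := ih (fun t ht => h t (Finset.mem_insert_of_mem ht))
    obtain ⟨ma, hma⟩ := h a (Finset.mem_insert_self a T)
    refine ⟨max M' ma, fun t ht => ?_⟩
    rcases Finset.mem_insert.1 ht with rfl | ht'
    · exact pow_mul_mem hma (le_max_right _ _)
    · exact pow_mul_mem (hM' t ht') (le_max_left _ _)

/-- Sullivant's Conjecture 3.3 as proved in the paper: for all sufficiently large `m`, the colon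
ideal `(I_G : θ₀^m)` equals the saturation `p_G`; in particular it is prime. -/
theorem colon_eq_satPG_of_large {n : ℕ} (hn : 1 ≤ n)
    (E : Fin n → Fin n → Prop) [DecidableRel E] (hE : ∀ i j, E i j → i < j) :
    ∃ m₀ : ℕ, ∀ m : ℕ, m₀ ≤ m →
      Submodule.colon (impIdeal E) (Ideal.span {theta0 n ^ m}) = satPG E ∧
      (Submodule.colon (impIdeal E) (Ideal.span {theta0 n ^ m})).IsPrime := by
  classical
  have hmem : ∀ f : MvPolynomial (Sym2 (Fin n)) ℂ,
      f ∈ satPG E ↔ ∃ m : ℕ, theta0 n ^ m * f ∈ impIdeal E := fun f => Iff.rfl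
  have hsat_iff : ∀ f : MvPolynomial (Sym2 (Fin n)) ℂ,
      f ∈ satPG E ↔ PhiA E f = 0 := by
    intro f
    rw [hmem f]
    exact (ker_iff_sat E hE f).symm
  have hker : satPG E = RingHom.ker (PhiA E).toRingHom := by
    ext f
    rw [RingHom.mem_ker]
    exact hsat_iff f
  obtain ⟨T, hT⟩ := IsNoetherian.noetherian (satPG E : Submodule (MvPolynomial (Sym2 (Fin n)) ℂ)
    (MvPolynomial (Sym2 (Fin n)) ℂ))
  have hexp : ∀ t ∈ T, ∃ m : ℕ, theta0 n ^ m * t ∈ impIdeal E := by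
    intro t ht
    have h1 : t ∈ satPG E := by
      rw [← hT]
      exact Submodule.subset_span ht
    exact (hmem t).1 h1
  obtain ⟨M, hM⟩ := uniform_bound (impIdeal E) (theta0 n) T hexp
  refine ⟨M, fun m hm => ?_⟩
  have hcolon : Submodule.colon (impIdeal E) (Ideal.span {theta0 n ^ m}) = satPG E := by
    apply le_antisymm
    · intro f hf
      have hf' : f • theta0 n ^ m ∈ impIdeal E := Submodule.mem_colon_span_singleton.mp hf
      rw [smul_eq_mul, mul_comm] at hf'
      rw [hmem]
      exact ⟨m, hf'⟩
    · rw [← hT]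
      rw [Submodule.span_le]
      intro t ht
      rw [SetLike.mem_coe]
      have h2 : theta0 n ^ m * t ∈ impIdeal E := pow_mul_mem (hM t ht) hm
      rw [mul_comm, ← smul_eq_mul] at h2
      exact Submodule.mem_colon_span_singleton.mpr h2
  refine ⟨hcolon, ?_⟩
  rw [hcolon, hker]
  exact RingHom.ker_isPrime _
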